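/- Symmetry rule: let T:V→V be a graph automorphism of a finite graph G with T² = identity, and let Γ be a T-invariant family of walks (T(Γ)=Γ). Then Mod(Γ) = inf{ E(ρ) : ρ ∈ A(Γ), ρ = ρ∘T }, i.e., the infimum of the energy over admissible densities may be restricted to T-invariant ones. -/

import Mathlib

open scoped ENNReal

variable {V : Type*} [DecidableEq V] {G : SimpleGraph V} [Fintype G.edgeSet]

/-- A walk in `G` with arbitrary endpoints. -/
abbrev GWalk (G : SimpleGraph V) : Type _ := Σ u : V, Σ v : V, G.Walk u v

/-- The `ρ`-length of a walk: sum of `ρ` over traversed edges with multiplicity. -/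
def wlen (ρ : G.edgeSet → ℝ) (γ : GWalk G) : ℝ :=
  ∑ e : G.edgeSet, (γ.2.2.edges.count (e : Sym2 V) : ℝ) * ρ e

/-- Admissible densities for a family of walks. -/
def Adm (Γ : Set (GWalk G)) : Set (G.edgeSet → ℝ) :=
  {ρ | (∀ e, 0 ≤ ρ e) ∧ ∀ γ ∈ Γ, 1 ≤ wlen ρ γ}

/-- The energy of a density. -/
def energy (G : SimpleGraph V) [Fintype G.edgeSet] (ρ : G.edgeSet → ℝ) : ℝ :=
  ∑ e, ρ e ^ 2

/-- The modulus of a family of walks. -/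
noncomputable def GMod (Γ : Set (GWalk G)) : ℝ≥0∞ :=
  sInf ((fun ρ => ENNReal.ofReal (energy G ρ)) '' Adm Γ)

lemma Tinj (T : G ≃g G) : Function.Injective (T : V → V) := T.toEquiv.injective

lemma f_invol (T : G ≃g G) (hT : ∀ v, T (T v) = v) (e : G.edgeSet) :
    T.mapEdgeSet (T.mapEdgeSet e) = e := by
  ext : 1
  show Sym2.map T (Sym2.map T (e : Sym2 V)) = e
  rw [Sym2.map_map]
  have : ((T : V → V) ∘ (T : V → V)) = id := funext fun v => hT v
  rw [this, Sym2.map_id, id_eq]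

lemma wlen_comp (T : G ≃g G) (hT : ∀ v, T (T v) = v) (ρ : G.edgeSet → ℝ) (γ : GWalk G) :
    wlen (fun e => ρ (T.mapEdgeSet e)) γ
      = wlen ρ (⟨T γ.1, T γ.2.1, γ.2.2.map T.toHom⟩ : GWalk G) := by
  unfold wlen
  have hcount : ∀ (x : G.edgeSet),
      ((γ.2.2.map T.toHom).edges.count (x : Sym2 V) : ℝ)
        = (γ.2.2.edges.count ((T.mapEdgeSet x : G.edgeSet) : Sym2 V) : ℝ) := by
    intro x
    rw [SimpleGraph.Walk.edges_map]
    congr 1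
    have hx : (x : Sym2 V) = Sym2.map T ((T.mapEdgeSet x : G.edgeSet) : Sym2 V) := by
      have := f_invol T hT x
      exact congrArg Subtype.val this.symm
    rw [hx]
    exact List.count_map_of_injective γ.2.2.edges (Sym2.map (T : V → V))
      (Sym2.map.injective (Tinj T)) _
  calc ∑ e : G.edgeSet, (γ.2.2.edges.count (e : Sym2 V) : ℝ) * ρ (T.mapEdgeSet e)
      = ∑ e : G.edgeSet,
          (γ.2.2.edges.count ((T.mapEdgeSet (T.mapEdgeSet e) : G.edgeSet) : Sym2 V) : ℝ)
            * ρ (T.mapEdgeSet e) := by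
        refine Finset.sum_congr rfl fun e _ => ?_
        rw [f_invol T hT]
    _ = ∑ e : G.edgeSet,
          (γ.2.2.edges.count ((T.mapEdgeSet e : G.edgeSet) : Sym2 V) : ℝ) * ρ e :=
        Equiv.sum_comp T.mapEdgeSet
          (fun e => (γ.2.2.edges.count ((T.mapEdgeSet e : G.edgeSet) : Sym2 V) : ℝ) * ρ e)
    _ = _ := by
        refine Finset.sum_congr rfl fun e _ => ?_
        rw [hcount]

theorem symmetry_rule (T : G ≃g G) (hT : ∀ v, T (T v) = v) (Γ : Set (GWalk G))
    (hinv : (fun γ : GWalk G => (⟨T γ.1, T γ.2.1, γ.2.2.map T.toHom⟩ : GWalk G)) '' Γ = Γ) :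
    GMod Γ = sInf ((fun ρ => ENNReal.ofReal (energy G ρ)) ''
      {ρ : G.edgeSet → ℝ | ρ ∈ Adm Γ ∧ ∀ e, ρ (T.mapEdgeSet e) = ρ e}) := by
  apply le_antisymm
  · apply sInf_le_sInf
    exact Set.image_mono fun ρ hρ => hρ.1
  · apply le_sInf
    rintro x ⟨ρ, hρ, rfl⟩
    -- build symmetrized density
    set σ : G.edgeSet → ℝ := fun e => (ρ e + ρ (T.mapEdgeSet e)) / 2 with hσ
    have hρT : ∀ γ ∈ Γ, 1 ≤ wlen (fun e => ρ (T.mapEdgeSet e)) γ := by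
      intro γ hγ
      rw [wlen_comp T hT]
      apply hρ.2
      rw [← hinv]
      exact ⟨γ, hγ, rfl⟩
    have hσAdm : σ ∈ Adm Γ := by
      constructor
      · intro e
        have := hρ.1 e
        have := hρ.1 (T.mapEdgeSet e)
        positivity
      · intro γ hγ
        have h1 := hρ.2 γ hγ
        have h2 := hρT γ hγ
        have : wlen σ γ = (wlen ρ γ + wlen (fun e => ρ (T.mapEdgeSet e)) γ) / 2 := by
          unfold wlen
          rw [← Finset.sum_add_distrib, Finset.sum_div]
          refine Finset.sum_congr rfl fun e _ => ?_
          simp only [hσ]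
          ring
        rw [this]
        linarith
    have hσinv : ∀ e, σ (T.mapEdgeSet e) = σ e := by
      intro e
      simp only [hσ, f_invol T hT]
      ring
    have hE : energy G σ ≤ energy G ρ := by
      have hE2 : energy G (fun e => ρ (T.mapEdgeSet e)) = energy G ρ := by
        unfold energy
        exact Equiv.sum_comp T.mapEdgeSet (fun e => ρ e ^ 2)
      have : energy G σ ≤ (energy G ρ + energy G (fun e => ρ (T.mapEdgeSet e))) / 2 := by
        unfold energy
        rw [← Finset.sum_add_distrib, Finset.sum_div]
        refine Finset.sum_le_sum fun e _ => ?_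
        simp only [hσ]
        nlinarith [sq_nonneg (ρ e - ρ (T.mapEdgeSet e))]
      rw [hE2] at this
      linarith
    exact le_trans (sInf_le ⟨σ, ⟨hσAdm, hσinv⟩, rfl⟩) (ENNReal.ofReal_le_ofReal hE)
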